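/- Let p be a prime and k, m positive integers with m ≥ k, and k ≥ 2 if p = 2. The group G = ⟨σ, τ ∣ τ^(p^m) = σ^(p^(m-k)) = 1, στσ⁻¹ = τ^(p^k+1)⟩ has exponent p^m. -/
import Mathlib


/-- Relators for the presentation ⟨σ, τ ∣ τ^(p^m) = σ^(p^(m-k)) = 1, στσ⁻¹ = τ^(p^k+1)⟩,
where `true` corresponds to σ and `false` to τ. -/
def demushkinRels (p m k : ℕ) : Set (FreeGroup Bool) :=
  { FreeGroup.of false ^ p ^ m,
    FreeGroup.of true ^ p ^ (m - k),
    FreeGroup.of true * FreeGroup.of false * (FreeGroup.of true)⁻¹ *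
      (FreeGroup.of false ^ (p ^ k + 1))⁻¹ }

section NumberTheory

lemma sum_range_pow_decomp (x : ℤ) (N M : ℕ) :
    ∑ i ∈ Finset.range (N * M), x ^ i
      = (∑ i ∈ Finset.range N, (x ^ M) ^ i) * ∑ j ∈ Finset.range M, x ^ j := by
  induction N with
  | zero => simp
  | succ N ih =>
    rw [Nat.succ_mul, Finset.sum_range_add, ih, Finset.sum_range_succ, add_mul]
    congr 1
    rw [Finset.mul_sum, ← pow_mul]
    exact Finset.sum_congr rfl fun j _ => by rw [← pow_add, mul_comm N M]

lemma dvd_sum_range_pow_self {p : ℕ} (x : ℤ) (h : (p : ℤ) ∣ x - 1) :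
    (p : ℤ) ∣ ∑ i ∈ Finset.range p, x ^ i := by
  have h1 : ∀ i : ℕ, (p : ℤ) ∣ x ^ i - 1 := by
    intro i
    exact dvd_trans h (by simpa using sub_dvd_pow_sub_pow x 1 i)
  have h2 : (p:ℤ) ∣ (∑ i ∈ Finset.range p, x ^ i) - p := by
    have := Finset.dvd_sum (fun i (_ : i ∈ Finset.range p) => h1 i)
    rwa [Finset.sum_sub_distrib, Finset.sum_const, Finset.card_range,
      nsmul_eq_mul, mul_one] at this
  have := dvd_add h2 (dvd_refl (p:ℤ))
  simpa using this

lemma pow_pow_sub_one_dvd {p : ℕ} (x : ℤ) (k : ℕ) (hk : 1 ≤ k)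
    (h : (p:ℤ) ^ k ∣ x - 1) (j : ℕ) : (p:ℤ) ^ (k + j) ∣ x ^ p ^ j - 1 := by
  induction j with
  | zero => simpa using h
  | succ j ih =>
    have key : x ^ p ^ (j+1) - 1 = (∑ i ∈ Finset.range p, (x ^ p ^ j) ^ i) * (x ^ p ^ j - 1) := by
      rw [geom_sum_mul, ← pow_mul, pow_succ, mul_comm (p^j) p]
    rw [key, show k + (j+1) = (k+j) + 1 by omega, pow_succ]
    have hp1 : (p:ℤ) ∣ x ^ p ^ j - 1 := by
      refine dvd_trans ?_ ih
      exact dvd_pow_self _ (by omega)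
    exact mul_comm ((p:ℤ)^(k+j)) p ▸ mul_dvd_mul (dvd_sum_range_pow_self _ hp1) ih

lemma dvd_sum_range_pow_pow {p : ℕ} (x : ℤ) (h : (p:ℤ) ∣ x - 1) (m : ℕ) :
    (p:ℤ) ^ m ∣ ∑ i ∈ Finset.range (p ^ m), x ^ i := by
  induction m with
  | zero => simp
  | succ m ih =>
    rw [show p^(m+1) = p * p^m by rw [pow_succ, mul_comm], sum_range_pow_decomp x p (p^m),
      pow_succ, mul_comm ((p:ℤ)^m)]
    refine mul_dvd_mul ?_ ih
    apply dvd_sum_range_pow_self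
    refine dvd_trans h (by simpa using sub_dvd_pow_sub_pow x 1 (p^m))

end NumberTheory

section Helpers

/-- The hom `Multiplicative (ZMod n) →* G` sending `1` to `g`, given `g ^ n = 1`. -/
def zmodPowHom {G : Type*} [Group G] (n : ℕ) (g : G) (h : g ^ (n : ℤ) = 1) :
    Multiplicative (ZMod n) →* G :=
  AddMonoidHom.toMultiplicativeLeft
    (ZMod.lift n ⟨zmultiplesHom (Additive G) (Additive.ofMul g), by
      simpa [zmultiplesHom_apply] using congrArg Additive.ofMul h⟩)

lemma zmodPowHom_intCast {G : Type*} [Group G] (n : ℕ) (g : G) (h : g ^ (n : ℤ) = 1) (c : ℤ) :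
    zmodPowHom n g h (Multiplicative.ofAdd ((c : ℤ) : ZMod n)) = g ^ c := by
  simp [zmodPowHom, ZMod.lift_coe]

lemma zmodPowHom_natCast {G : Type*} [Group G] (n : ℕ) (g : G) (h : g ^ (n : ℤ) = 1) (c : ℕ) :
    zmodPowHom n g h (Multiplicative.ofAdd ((c : ℕ) : ZMod n)) = g ^ c := by
  have := zmodPowHom_intCast n g h (c : ℤ)
  simpa using this

lemma multiplicative_zmod_hom_ext {G : Type*} [Group G] {n : ℕ}
    {f₁ f₂ : Multiplicative (ZMod n) →* G}
    (h : f₁ (Multiplicative.ofAdd 1) = f₂ (Multiplicative.ofAdd 1)) : f₁ = f₂ := by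
  refine MonoidHom.ext fun x => ?_
  obtain ⟨c, hc⟩ := ZMod.intCast_surjective (Multiplicative.toAdd x)
  have hx : x = Multiplicative.ofAdd ((c : ZMod n)) := by rw [hc]; rfl
  rw [hx]
  have e1 : ((c : ZMod n)) = c • (1 : ZMod n) := by simp
  rw [e1]
  have : ∀ (f : Multiplicative (ZMod n) →* G),
      f (Multiplicative.ofAdd (c • (1 : ZMod n))) = f (Multiplicative.ofAdd 1) ^ c := by
    intro f
    rw [← map_zpow]
    congr 1
  rw [this f₁, this f₂, h]

/-- Units of `ZMod n` acting as automorphisms of `Multiplicative (ZMod n)`. -/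
def unitsSmulAut (n : ℕ) : (ZMod n)ˣ →* MulAut (Multiplicative (ZMod n)) where
  toFun c := AddEquiv.toMultiplicative (DistribMulAction.toAddAut (ZMod n)ˣ (ZMod n) c)
  map_one' := by ext x; simp
  map_mul' c d := by ext x; simp [mul_smul]

lemma unitsSmulAut_apply (n : ℕ) (c : (ZMod n)ˣ) (x : ZMod n) :
    unitsSmulAut n c (Multiplicative.ofAdd x) = Multiplicative.ofAdd ((c : ZMod n) * x) := by
  simp [unitsSmulAut, Units.smul_def]

lemma mul_zmod_pow_card {t : ℕ} (y : Multiplicative (ZMod t)) : y ^ t = 1 := by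
  have : y = Multiplicative.ofAdd (Multiplicative.toAdd y) := rfl
  rw [this, ← ofAdd_nsmul]
  have : t • Multiplicative.toAdd y = 0 := by
    rw [nsmul_eq_mul]
    simp [ZMod.natCast_self]
  rw [this]; rfl

lemma sdp_pow {N G : Type*} [CommGroup N] [Group G] {φ : G →* MulAut N}
    (x : SemidirectProduct N G φ) (t : ℕ) :
    x ^ t = ⟨∏ i ∈ Finset.range t, φ (x.right ^ i) x.left, x.right ^ t⟩ := by
  induction t with
  | zero => ext <;> simp
  | succ t ih =>
    rw [pow_succ, ih, SemidirectProduct.mul_def]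
    ext <;> simp [Finset.prod_range_succ, pow_succ]

end Helpers

section Demushkin

variable (p m k : ℕ)

lemma coprime_q (hp : p.Prime) (hk : 1 ≤ k) : Nat.Coprime (p ^ k + 1) (p ^ m) := by
  refine Nat.Coprime.pow_right _ ?_
  rw [Nat.coprime_comm]
  refine (Nat.Prime.coprime_iff_not_dvd hp).mpr ?_
  intro hdvd
  have h1 : p ∣ p ^ k := dvd_pow_self p (by omega)
  have h2 : p ∣ 1 := (Nat.dvd_add_right h1).mp hdvd
  have := hp.two_le
  have := Nat.dvd_one.mp h2
  omega

/-- The unit `p^k + 1` of `ZMod (p^m)`. -/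
def demUnit (hp : p.Prime) (hk : 1 ≤ k) : (ZMod (p ^ m))ˣ :=
  ZMod.unitOfCoprime _ (coprime_q p m k hp hk)

lemma demUnit_val (hp : p.Prime) (hk : 1 ≤ k) :
    ((demUnit p m k hp hk : (ZMod (p ^ m))ˣ) : ZMod (p ^ m)) = ((p ^ k + 1 : ℕ) : ZMod (p ^ m)) :=
  ZMod.coe_unitOfCoprime _ _

lemma demUnit_pow_card (hp : p.Prime) (hk : 1 ≤ k) (hmk : k ≤ m) :
    demUnit p m k hp hk ^ p ^ (m - k) = 1 := by
  ext
  rw [Units.val_pow_eq_pow_val, demUnit_val, Units.val_one]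
  have hd : (p : ℤ) ^ m ∣ ((p ^ k + 1 : ℤ)) ^ p ^ (m - k) - 1 := by
    have := pow_pow_sub_one_dvd (p := p) ((p : ℤ) ^ k + 1) k hk (by simp) (m - k)
    rwa [Nat.add_sub_cancel' hmk] at this
  have h0 : (((((p ^ k + 1 : ℤ)) ^ p ^ (m - k) - 1 : ℤ)) : ZMod (p ^ m)) = 0 := by
    rw [ZMod.intCast_zmod_eq_zero_iff_dvd]
    exact_mod_cast hd
  push_cast at h0 ⊢
  linear_combination h0

/-- The action hom for the semidirect product model. -/
def demPhi (hp : p.Prime) (hk : 1 ≤ k) (hmk : k ≤ m) :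
    Multiplicative (ZMod (p ^ (m - k))) →* MulAut (Multiplicative (ZMod (p ^ m))) :=
  (unitsSmulAut (p ^ m)).comp
    (zmodPowHom (p ^ (m - k)) (demUnit p m k hp hk)
      (by rw [zpow_natCast]; exact demUnit_pow_card p m k hp hk hmk))

end Demushkin

section PresentedSide

variable (p m k : ℕ)

lemma dem_rel_one (r : FreeGroup Bool) (hr : r ∈ demushkinRels p m k) :
    PresentedGroup.mk (demushkinRels p m k) r = 1 :=
  (QuotientGroup.eq_one_iff r).mpr (Subgroup.subset_normalClosure hr)

lemma dem_tau_pow :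
    (PresentedGroup.of false : PresentedGroup (demushkinRels p m k)) ^ p ^ m = 1 := by
  have h := dem_rel_one p m k _ (show FreeGroup.of false ^ p ^ m ∈ demushkinRels p m k by
    simp [demushkinRels])
  calc (PresentedGroup.of false : PresentedGroup (demushkinRels p m k)) ^ p ^ m
      = PresentedGroup.mk _ (FreeGroup.of false ^ p ^ m) := (map_pow _ _ _).symm
    _ = 1 := h

lemma dem_sigma_pow :
    (PresentedGroup.of true : PresentedGroup (demushkinRels p m k)) ^ p ^ (m - k) = 1 := by
  have h := dem_rel_one p m k _ (show FreeGroup.of true ^ p ^ (m - k) ∈ demushkinRels p m k by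
    simp [demushkinRels])
  calc (PresentedGroup.of true : PresentedGroup (demushkinRels p m k)) ^ p ^ (m - k)
      = PresentedGroup.mk _ (FreeGroup.of true ^ p ^ (m - k)) := (map_pow _ _ _).symm
    _ = 1 := h

lemma dem_conj_rel :
    (PresentedGroup.of true : PresentedGroup (demushkinRels p m k)) * PresentedGroup.of false *
      (PresentedGroup.of true)⁻¹ = PresentedGroup.of false ^ (p ^ k + 1) := by
  have h := dem_rel_one p m k _
    (show FreeGroup.of true * FreeGroup.of false * (FreeGroup.of true)⁻¹ *
      (FreeGroup.of false ^ (p ^ k + 1))⁻¹ ∈ demushkinRels p m k by simp [demushkinRels])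
  rw [map_mul, map_mul, map_mul, map_inv, map_inv, map_pow] at h
  exact mul_inv_eq_one.mp h

lemma dem_conj_rel_pow (j : ℕ) :
    (PresentedGroup.of true : PresentedGroup (demushkinRels p m k)) ^ j *
      PresentedGroup.of false * ((PresentedGroup.of true) ^ j)⁻¹
      = PresentedGroup.of false ^ ((p ^ k + 1) ^ j) := by
  set σ : PresentedGroup (demushkinRels p m k) := PresentedGroup.of true with hσ
  set τ : PresentedGroup (demushkinRels p m k) := PresentedGroup.of false with hτ
  have hconj : ∀ (t : ℕ) (x : PresentedGroup (demushkinRels p m k)),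
      σ * x ^ t * σ⁻¹ = (σ * x * σ⁻¹) ^ t := by
    intro t x
    simpa [MulAut.conj_apply] using (map_pow (MulAut.conj σ) x t).symm
  induction j with
  | zero => simp
  | succ j ih =>
    rw [pow_succ' σ, mul_inv_rev]
    calc σ * σ ^ j * τ * ((σ ^ j)⁻¹ * σ⁻¹)
        = σ * (σ ^ j * τ * (σ ^ j)⁻¹) * σ⁻¹ := by group
      _ = σ * τ ^ ((p ^ k + 1) ^ j) * σ⁻¹ := by rw [ih]
      _ = (σ * τ * σ⁻¹) ^ ((p ^ k + 1) ^ j) := hconj _ _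
      _ = (τ ^ (p ^ k + 1)) ^ ((p ^ k + 1) ^ j) := by rw [dem_conj_rel]
      _ = τ ^ ((p ^ k + 1) ^ (j + 1)) := by rw [← pow_mul, pow_succ']

end PresentedSide

section Model

variable (p m k : ℕ) (hp : p.Prime) (hk : 1 ≤ k) (hmk : k ≤ m)

/-- The concrete semidirect product model. -/
abbrev DemK :=
  SemidirectProduct (Multiplicative (ZMod (p ^ m))) (Multiplicative (ZMod (p ^ (m - k))))
    (demPhi p m k hp hk hmk)

/-- The generator map for the hom to the model. -/
def demFgen : Bool → DemK p m k hp hk hmk := fun b =>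
  if b then SemidirectProduct.inr (Multiplicative.ofAdd (1 : ZMod (p ^ (m - k))))
  else SemidirectProduct.inl (Multiplicative.ofAdd (1 : ZMod (p ^ m)))

lemma demPhi_one_one :
    demPhi p m k hp hk hmk (Multiplicative.ofAdd (1 : ZMod (p ^ (m - k))))
        (Multiplicative.ofAdd (1 : ZMod (p ^ m)))
      = Multiplicative.ofAdd (((p ^ k + 1 : ℕ) : ZMod (p ^ m))) := by
  have h1 : (1 : ZMod (p ^ (m - k))) = ((1 : ℕ) : ZMod (p ^ (m - k))) := by norm_num
  rw [demPhi, MonoidHom.comp_apply, h1, zmodPowHom_natCast, pow_one, unitsSmulAut_apply,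
    demUnit_val, mul_one]

lemma demF_rels : ∀ r ∈ demushkinRels p m k,
    FreeGroup.lift (demFgen p m k hp hk hmk) r = 1 := by
  intro r hr
  simp only [demushkinRels, Set.mem_insert_iff, Set.mem_singleton_iff] at hr
  rcases hr with rfl | rfl | rfl
  · rw [map_pow, FreeGroup.lift_apply_of]
    simp only [demFgen, if_false, Bool.false_eq_true]
    rw [← map_pow, mul_zmod_pow_card, map_one]
  · rw [map_pow, FreeGroup.lift_apply_of]
    simp only [demFgen, if_true]
    rw [← map_pow, mul_zmod_pow_card, map_one]
  · rw [map_mul, map_mul, map_mul, map_inv, map_inv, map_pow, FreeGroup.lift_apply_of,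
      FreeGroup.lift_apply_of]
    simp only [demFgen, if_true, if_false, Bool.false_eq_true]
    have h1 : (SemidirectProduct.inr (Multiplicative.ofAdd (1 : ZMod (p ^ (m - k)))) *
        SemidirectProduct.inl (Multiplicative.ofAdd (1 : ZMod (p ^ m))) *
        (SemidirectProduct.inr (Multiplicative.ofAdd (1 : ZMod (p ^ (m - k)))))⁻¹
        : DemK p m k hp hk hmk)
        = SemidirectProduct.inl (demPhi p m k hp hk hmk (Multiplicative.ofAdd 1)
            (Multiplicative.ofAdd 1)) := by
      rw [← map_inv]
      exact (SemidirectProduct.inl_aut _ _).symm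
    rw [h1, demPhi_one_one, ← map_pow, ← ofAdd_nsmul, nsmul_eq_mul,
      mul_one, mul_inv_eq_one, Nat.cast_add, Nat.cast_pow, Nat.cast_one]

/-- The hom from the presented group to the model. -/
def demF : PresentedGroup (demushkinRels p m k) →* DemK p m k hp hk hmk :=
  PresentedGroup.toGroup (demF_rels p m k hp hk hmk)

end Model

section Inverse

variable (p m k : ℕ) (hp : p.Prime) (hk : 1 ≤ k) (hmk : k ≤ m)

/-- The hom from `Multiplicative (ZMod (p^m))` sending 1 to τ. -/
def demG1 : Multiplicative (ZMod (p ^ m)) →* PresentedGroup (demushkinRels p m k) :=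
  zmodPowHom (p ^ m) (PresentedGroup.of false)
    (by rw [zpow_natCast]; exact dem_tau_pow p m k)

/-- The hom from `Multiplicative (ZMod (p^(m-k)))` sending 1 to σ. -/
def demG2 : Multiplicative (ZMod (p ^ (m - k))) →* PresentedGroup (demushkinRels p m k) :=
  zmodPowHom (p ^ (m - k)) (PresentedGroup.of true)
    (by rw [zpow_natCast]; exact dem_sigma_pow p m k)

lemma demG_compat : ∀ a, (demG1 p m k).comp ((demPhi p m k hp hk hmk a)).toMonoidHom
    = (MulAut.conj (demG2 p m k a)).toMonoidHom.comp (demG1 p m k) := by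
  intro a
  haveI : NeZero (p ^ (m - k)) := ⟨pow_ne_zero _ hp.pos.ne'⟩
  obtain ⟨j, hj⟩ := ZMod.natCast_zmod_surjective (Multiplicative.toAdd a)
  have ha : a = Multiplicative.ofAdd ((j : ZMod (p ^ (m - k)))) := by rw [hj]; rfl
  rw [ha]
  apply multiplicative_zmod_hom_ext
  rw [MonoidHom.comp_apply, MonoidHom.comp_apply, MulEquiv.coe_toMonoidHom,
    MulEquiv.coe_toMonoidHom, MulAut.conj_apply]
  rw [demPhi, MonoidHom.comp_apply, zmodPowHom_natCast, unitsSmulAut_apply,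
    Units.val_pow_eq_pow_val, demUnit_val, mul_one, ← Nat.cast_pow]
  have e1 : (1 : ZMod (p ^ m)) = ((1 : ℕ) : ZMod (p ^ m)) := by norm_num
  rw [demG1, demG2, zmodPowHom_natCast, zmodPowHom_natCast, e1, zmodPowHom_natCast, pow_one]
  exact (dem_conj_rel_pow p m k j).symm

/-- The hom from the model to the presented group. -/
def demG : DemK p m k hp hk hmk →* PresentedGroup (demushkinRels p m k) :=
  SemidirectProduct.lift (demG1 p m k) (demG2 p m k) (demG_compat p m k hp hk hmk)

/-- The two homs are inverse isomorphisms. -/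
def demEquiv : PresentedGroup (demushkinRels p m k) ≃* DemK p m k hp hk hmk := by
  refine MonoidHom.toMulEquiv (demF p m k hp hk hmk) (demG p m k hp hk hmk) ?_ ?_
  · apply PresentedGroup.ext
    intro x
    have e1 : ∀ t : ℕ, (1 : ZMod t) = ((1 : ℕ) : ZMod t) := fun t => by norm_num
    cases x
    · rw [MonoidHom.comp_apply, MonoidHom.id_apply, demF, PresentedGroup.toGroup.of]
      simp only [demFgen, if_false, Bool.false_eq_true]
      rw [demG, SemidirectProduct.lift_inl, demG1, e1, zmodPowHom_natCast, pow_one]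
    · rw [MonoidHom.comp_apply, MonoidHom.id_apply, demF, PresentedGroup.toGroup.of]
      simp only [demFgen, if_true]
      rw [demG, SemidirectProduct.lift_inr, demG2, e1, zmodPowHom_natCast, pow_one]
  · apply SemidirectProduct.hom_ext
    · rw [MonoidHom.comp_assoc, MonoidHom.id_comp]
      apply multiplicative_zmod_hom_ext
      have e1 : (1 : ZMod (p ^ m)) = ((1 : ℕ) : ZMod (p ^ m)) := by norm_num
      rw [MonoidHom.comp_apply, MonoidHom.comp_apply, demG, SemidirectProduct.lift_inl,
        demG1, e1, zmodPowHom_natCast, pow_one, demF, PresentedGroup.toGroup.of]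
      simp only [demFgen, if_false, Bool.false_eq_true, Nat.cast_one]
    · rw [MonoidHom.comp_assoc, MonoidHom.id_comp]
      apply multiplicative_zmod_hom_ext
      have e1 : (1 : ZMod (p ^ (m - k))) = ((1 : ℕ) : ZMod (p ^ (m - k))) := by norm_num
      rw [MonoidHom.comp_apply, MonoidHom.comp_apply, demG, SemidirectProduct.lift_inr,
        demG2, e1, zmodPowHom_natCast, pow_one, demF, PresentedGroup.toGroup.of]
      simp only [demFgen, if_true, Nat.cast_one]

end Inverse

section ExponentK

variable (p m k : ℕ) (hp : p.Prime) (hk : 1 ≤ k) (hmk : k ≤ m)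

lemma demPhi_natCast (j : ℕ) (x : ZMod (p ^ m)) :
    demPhi p m k hp hk hmk (Multiplicative.ofAdd ((j : ZMod (p ^ (m - k)))))
        (Multiplicative.ofAdd x)
      = Multiplicative.ofAdd ((((p ^ k + 1) ^ j : ℕ) : ZMod (p ^ m)) * x) := by
  rw [demPhi, MonoidHom.comp_apply, zmodPowHom_natCast, unitsSmulAut_apply,
    Units.val_pow_eq_pow_val, demUnit_val, ← Nat.cast_pow]

lemma demK_pow_exp (x : DemK p m k hp hk hmk) : x ^ p ^ m = 1 := by
  haveI : NeZero (p ^ (m - k)) := ⟨pow_ne_zero _ hp.pos.ne'⟩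
  rw [sdp_pow]
  obtain ⟨j, hj⟩ := ZMod.natCast_zmod_surjective (Multiplicative.toAdd x.right)
  have ha : x.right = Multiplicative.ofAdd ((j : ZMod (p ^ (m - k)))) := by rw [hj]; rfl
  have hxl : x.left = Multiplicative.ofAdd (Multiplicative.toAdd x.left) := rfl
  set w : ZMod (p ^ m) := (((p ^ k + 1) ^ j : ℕ) : ZMod (p ^ m)) with hw
  have hterm : ∀ i : ℕ, demPhi p m k hp hk hmk (x.right ^ i) x.left
      = Multiplicative.ofAdd (w ^ i * Multiplicative.toAdd x.left) := by
    intro i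
    have hri : x.right ^ i = Multiplicative.ofAdd (((j * i : ℕ) : ZMod (p ^ (m - k)))) := by
      rw [ha, ← ofAdd_nsmul]
      congr 1
      rw [nsmul_eq_mul]
      push_cast
      ring
    rw [hri, hxl, demPhi_natCast]
    simp only [toAdd_ofAdd]
    congr 1
    rw [hw]
    push_cast
    ring
  have hsum : (∑ i ∈ Finset.range (p ^ m), w ^ i) = 0 := by
    have hZ : ((p:ℤ) ^ m) ∣ ∑ i ∈ Finset.range (p ^ m), (((p:ℤ) ^ k + 1) ^ j) ^ i := by
      apply dvd_sum_range_pow_pow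
      have h1 : (p:ℤ) ∣ ((p:ℤ) ^ k + 1) - 1 := by
        simpa using dvd_pow_self (p:ℤ) (by omega : k ≠ 0)
      exact dvd_trans h1 (by simpa using sub_dvd_pow_sub_pow ((p:ℤ)^k+1) 1 j)
    have h0 : ((∑ i ∈ Finset.range (p ^ m), (((p:ℤ) ^ k + 1) ^ j) ^ i : ℤ) : ZMod (p ^ m)) = 0 := by
      rw [ZMod.intCast_zmod_eq_zero_iff_dvd]
      exact_mod_cast hZ
    push_cast at h0
    rw [hw]
    push_cast
    exact h0
  have hleft : (∏ i ∈ Finset.range (p ^ m), demPhi p m k hp hk hmk (x.right ^ i) x.left)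
      = 1 := by
    calc (∏ i ∈ Finset.range (p ^ m), demPhi p m k hp hk hmk (x.right ^ i) x.left)
        = ∏ i ∈ Finset.range (p ^ m),
            Multiplicative.ofAdd (w ^ i * Multiplicative.toAdd x.left) := by
          exact Finset.prod_congr rfl fun i _ => hterm i
      _ = Multiplicative.ofAdd (∑ i ∈ Finset.range (p ^ m),
            w ^ i * Multiplicative.toAdd x.left) := (ofAdd_sum _ _).symm
      _ = 1 := by rw [← Finset.sum_mul, hsum, zero_mul]; rfl
  have hright : ∀ y : Multiplicative (ZMod (p ^ (m - k))), y ^ p ^ m = 1 := by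
    intro y
    have hm : p ^ m = p ^ (m - k) * p ^ k := by
      rw [← pow_add, Nat.sub_add_cancel hmk]
    rw [hm, pow_mul, mul_zmod_pow_card, one_pow]
  rw [hleft, hright]
  rfl

lemma demK_exponent : Monoid.exponent (DemK p m k hp hk hmk) = p ^ m := by
  apply Nat.dvd_antisymm
  · exact Monoid.exponent_dvd_of_forall_pow_eq_one (demK_pow_exp p m k hp hk hmk)
  · have horder : orderOf (SemidirectProduct.inl (Multiplicative.ofAdd (1 : ZMod (p ^ m)))
        : DemK p m k hp hk hmk) = p ^ m := by
      rw [orderOf_injective SemidirectProduct.inl SemidirectProduct.inl_injective,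
        orderOf_ofAdd_eq_addOrderOf, ZMod.addOrderOf_one]
    have hd := Monoid.order_dvd_exponent (SemidirectProduct.inl (Multiplicative.ofAdd
      (1 : ZMod (p ^ m))) : DemK p m k hp hk hmk)
    rwa [horder] at hd

end ExponentK

theorem stmt_2 (p m k : ℕ) (hp : p.Prime) (hk : 1 ≤ k) (hmk : k ≤ m)
    (hk2 : p = 2 → 2 ≤ k) :
    Monoid.exponent (PresentedGroup (demushkinRels p m k)) = p ^ m := by
  rw [Monoid.exponent_eq_of_mulEquiv (demEquiv p m k hp hk hmk)]
  exact demK_exponent p m k hp hk hmk
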